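/- Let V be a 4-dimensional real vector space with a Lorentzian inner product g of signature (+,+,+,−), extended complex-bilinearly to V⊗ℂ. Then every 2-dimensional totally null complex subspace N of V⊗ℂ has real index exactly one, i.e. N ∩ conj(N) is the complexification of a 1-dimensional real subspace of V. -/

import Mathlib

/-!
STATEMENT 1: Let V be a 4-dimensional real vector space with a Lorentzian inner
product g of signature (+,+,+,−), extended complex-bilinearly to V⊗ℂ. Then every
2-dimensional totally null complex subspace N of V⊗ℂ has real index exactly one,
i.e. N ∩ conj(N) is the complexification of a 1-dimensional real subspace of V.

We model the complexification of `V = Fin 4 → ℝ` as `Fin 4 → ℂ`, conjugation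
being coordinatewise, and the Lorentzian signature expressed by the existence of a
basis in which g has the diagonal form diag(1,1,1,-1).
-/

open scoped ComplexConjugate

/-- Coordinatewise complex conjugation on `Fin 4 → ℂ`, as a `conj`-semilinear map. -/
noncomputable def conjMap : (Fin 4 → ℂ) →ₛₗ[starRingEnd ℂ] (Fin 4 → ℂ) where
  toFun w := fun i => conj (w i)
  map_add' x y := by funext i; simp
  map_smul' c x := by funext i; simp [mul_comm]

/-- The real part of a complexified vector. -/
noncomputable def reVec (w : Fin 4 → ℂ) : Fin 4 → ℝ := fun i => (w i).re

/-- The imaginary part of a complexified vector. -/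
noncomputable def imVec (w : Fin 4 → ℂ) : Fin 4 → ℝ := fun i => (w i).im

/-- The complex-bilinear extension of a real bilinear form `gR` to the
complexification. -/
noncomputable def gCext (gR : (Fin 4 → ℝ) → (Fin 4 → ℝ) → ℝ)
    (x y : Fin 4 → ℂ) : ℂ :=
  (gR (reVec x) (reVec y) - gR (imVec x) (imVec y) : ℝ) +
    Complex.I * ((gR (reVec x) (imVec y) + gR (imVec x) (reVec y) : ℝ) : ℂ)

/-- The Lorentzian signature matrix diag(1,1,1,-1). -/
noncomputable def etaL : Fin 4 → Fin 4 → ℝ :=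
  fun i j => if i = j then (if (i : ℕ) < 3 then 1 else -1) else 0

lemma conjMap_apply (w : Fin 4 → ℂ) (i : Fin 4) : conjMap w i = conj (w i) := rfl

lemma real_iff_conj_fixed (v : Fin 4 → ℂ) : (∀ i, (v i).im = 0) ↔ conjMap v = v := by
  constructor
  · intro h; funext i; rw [conjMap_apply, Complex.conj_eq_iff_im]; exact h i
  · intro h i
    rw [← Complex.conj_eq_iff_im, ← conjMap_apply, h]

/-- Complexification of a real linear map on `Fin 4 → ℝ`. -/
noncomputable def cpxL (f : (Fin 4 → ℝ) →ₗ[ℝ] (Fin 4 → ℝ)) :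
    (Fin 4 → ℂ) →ₗ[ℂ] (Fin 4 → ℂ) where
  toFun w := fun i => (f (reVec w) i : ℂ) + (f (imVec w) i : ℂ) * Complex.I
  map_add' x y := by
    have hre : reVec (x + y) = reVec x + reVec y := by funext i; simp [reVec]
    have him : imVec (x + y) = imVec x + imVec y := by funext i; simp [imVec]
    funext i
    rw [hre, him, map_add, map_add]
    simp only [Pi.add_apply]
    push_cast
    ring
  map_smul' c x := by
    have hre : reVec (c • x) = c.re • reVec x - c.im • imVec x := by
      funext i; simp [reVec, imVec, Complex.mul_re]
    have him : imVec (c • x) = c.re • imVec x + c.im • reVec x := by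
      funext i; simp [reVec, imVec, Complex.mul_im]
    funext i
    rw [hre, him, map_sub, map_add, map_smul, map_smul, map_smul, map_smul]
    simp only [Pi.sub_apply, Pi.add_apply, Pi.smul_apply, smul_eq_mul, RingHom.id_apply,
      Pi.smul_apply]
    rw [Complex.ext_iff]
    constructor <;> simp <;> ring

lemma reVec_cpxL (f : (Fin 4 → ℝ) →ₗ[ℝ] (Fin 4 → ℝ)) (w : Fin 4 → ℂ) :
    reVec (cpxL f w) = f (reVec w) := by
  funext i; simp [reVec, cpxL]

lemma imVec_cpxL (f : (Fin 4 → ℝ) →ₗ[ℝ] (Fin 4 → ℝ)) (w : Fin 4 → ℂ) :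
    imVec (cpxL f w) = f (imVec w) := by
  funext i; simp [imVec, cpxL]

lemma cpxL_apply (f : (Fin 4 → ℝ) →ₗ[ℝ] (Fin 4 → ℝ)) (w : Fin 4 → ℂ) (i : Fin 4) :
    cpxL f w i = (f (reVec w) i : ℂ) + (f (imVec w) i : ℂ) * Complex.I := rfl

lemma cpxL_cpxL (f g : (Fin 4 → ℝ) →ₗ[ℝ] (Fin 4 → ℝ)) (w : Fin 4 → ℂ) :
    cpxL f (cpxL g w) = cpxL (f ∘ₗ g) w := by
  funext i
  rw [cpxL_apply, reVec_cpxL, imVec_cpxL, cpxL_apply]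
  rfl

lemma cpxL_id (w : Fin 4 → ℂ) : cpxL (LinearMap.id) w = w := by
  funext i
  rw [cpxL_apply]
  exact Complex.re_add_im (w i)

/-- Complexification of a real linear equivalence. -/
noncomputable def cpxE (e : (Fin 4 → ℝ) ≃ₗ[ℝ] (Fin 4 → ℝ)) :
    (Fin 4 → ℂ) ≃ₗ[ℂ] (Fin 4 → ℂ) :=
  LinearEquiv.ofLinear (cpxL e.toLinearMap) (cpxL e.symm.toLinearMap)
    (by apply LinearMap.ext; intro w
        show cpxL e.toLinearMap (cpxL e.symm.toLinearMap w) = w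
        rw [cpxL_cpxL]
        rw [show e.toLinearMap ∘ₗ e.symm.toLinearMap = LinearMap.id by
          ext v; simp]
        exact cpxL_id w)
    (by apply LinearMap.ext; intro w
        show cpxL e.symm.toLinearMap (cpxL e.toLinearMap w) = w
        rw [cpxL_cpxL]
        rw [show e.symm.toLinearMap ∘ₗ e.toLinearMap = LinearMap.id by
          ext v; simp]
        exact cpxL_id w)

lemma cpxE_apply (e : (Fin 4 → ℝ) ≃ₗ[ℝ] (Fin 4 → ℝ)) (w : Fin 4 → ℂ) :
    cpxE e w = cpxL e.toLinearMap w := rfl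

lemma cpxL_conj (f : (Fin 4 → ℝ) →ₗ[ℝ] (Fin 4 → ℝ)) (w : Fin 4 → ℂ) :
    cpxL f (conjMap w) = conjMap (cpxL f w) := by
  have hre : reVec (conjMap w) = reVec w := by
    funext i; simp [reVec, conjMap_apply]
  have him : imVec (conjMap w) = -imVec w := by
    funext i; simp [imVec, conjMap_apply]
  funext i
  rw [conjMap_apply, cpxL_apply, cpxL_apply, hre, him, map_neg]
  simp only [Pi.neg_apply]
  rw [Complex.ext_iff]
  constructor <;> simp

/-- Pull back the conclusion along a conjugation-compatible complex-linear
equivalence. -/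
lemma pullback (P : (Fin 4 → ℂ) ≃ₗ[ℂ] (Fin 4 → ℂ))
    (hP : ∀ w, P (conjMap w) = conjMap (P w))
    (N : Submodule ℂ (Fin 4 → ℂ)) (u : Fin 4 → ℂ) (hu : u ≠ 0)
    (hur : ∀ i, (u i).im = 0)
    (hspan : N.map (P : (Fin 4 → ℂ) →ₗ[ℂ] (Fin 4 → ℂ)) ⊓
      Submodule.comap conjMap (N.map (P : (Fin 4 → ℂ) →ₗ[ℂ] (Fin 4 → ℂ))) =
      Submodule.span ℂ {u}) :
    ∃ v : Fin 4 → ℂ, v ≠ 0 ∧ (∀ i, (v i).im = 0) ∧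
      N ⊓ Submodule.comap conjMap N = Submodule.span ℂ {v} := by
  have hPsymm : ∀ w, P.symm (conjMap w) = conjMap (P.symm w) := by
    intro w
    apply P.injective
    rw [hP, P.apply_symm_apply, P.apply_symm_apply]
  refine ⟨P.symm u, by simp [hu], ?_, ?_⟩
  · rw [real_iff_conj_fixed, ← hPsymm, (real_iff_conj_fixed u).mp hur]
  · ext z
    rw [Submodule.mem_inf]
    constructor
    · rintro ⟨hz1, hz2⟩
      have h1 : P z ∈ N.map (P : (Fin 4 → ℂ) →ₗ[ℂ] (Fin 4 → ℂ)) :=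
        Submodule.mem_map_of_mem hz1
      have h2 : P z ∈ Submodule.comap conjMap
          (N.map (P : (Fin 4 → ℂ) →ₗ[ℂ] (Fin 4 → ℂ))) := by
        rw [Submodule.mem_comap, ← hP]
        exact Submodule.mem_map_of_mem hz2
      have : P z ∈ Submodule.span ℂ {u} := by rw [← hspan]; exact ⟨h1, h2⟩
      rw [Submodule.mem_span_singleton] at this ⊢
      obtain ⟨c, hc⟩ := this
      refine ⟨c, by apply P.injective; rw [map_smul, P.apply_symm_apply]; exact hc⟩
    · intro hz
      rw [Submodule.mem_span_singleton] at hz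
      obtain ⟨c, hc⟩ := hz
      have hu' : u ∈ Submodule.span ℂ {u} := Submodule.mem_span_singleton_self u
      rw [← hspan, Submodule.mem_inf] at hu'
      obtain ⟨hu1, hu2⟩ := hu'
      obtain ⟨w, hwN, hwu⟩ := hu1
      rw [Submodule.mem_comap] at hu2
      obtain ⟨w2, hw2N, hw2u⟩ := hu2
      have hz1 : z ∈ N := by
        rw [← hc]
        have : P.symm u ∈ N := by
          have : P.symm u = w := by rw [← hwu]; exact P.symm_apply_apply w
          rw [this]; exact hwN
        exact Submodule.smul_mem _ _ this
      have hz2 : conjMap z ∈ N := by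
        have hcz : conjMap z = conj c • conjMap (P.symm u) := by
          rw [← hc]; exact map_smulₛₗ conjMap c (P.symm u)
        have h3 : conjMap (P.symm u) = w2 := by
          rw [← hPsymm, ← hw2u]; exact P.symm_apply_apply w2
        rw [hcz, h3]
        exact Submodule.smul_mem _ _ hw2N
      exact ⟨hz1, hz2⟩

/-- Factorization of a singular 2×2 matrix as an outer product. -/
lemma facto (a b c d : ℂ) (h : a * d = b * c) :
    ∃ p1 p2 q1 q2 : ℂ, a = p1 * q1 ∧ b = p1 * q2 ∧ c = p2 * q1 ∧ d = p2 * q2 := by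
  by_cases ha : a = 0
  · subst ha
    have hbc : b = 0 ∨ c = 0 := mul_eq_zero.mp (by rw [← h]; ring)
    rcases hbc with hb | hc
    · exact ⟨0, 1, c, d, by ring, by rw [hb]; ring, by ring, by ring⟩
    · exact ⟨b, d, 0, 1, by ring, by ring, by rw [hc]; ring, by ring⟩
  · refine ⟨a, c, 1, b / a, by ring, by field_simp, by ring, ?_⟩
    field_simp
    linear_combination h

/-- A pencil of singular 2×2 matrices has a common kernel vector or a common
cokernel vector. -/
lemma lemA (ax bx cx dx ay by' cy dy : ℂ)
    (hX : ax * dx = bx * cx) (hY : ay * dy = by' * cy)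
    (hP : ax * dy + ay * dx = bx * cy + by' * cx) :
    ∃ u1 u2 : ℂ, ¬(u1 = 0 ∧ u2 = 0) ∧
      ((ax * u1 + bx * u2 = 0 ∧ cx * u1 + dx * u2 = 0 ∧
        ay * u1 + by' * u2 = 0 ∧ cy * u1 + dy * u2 = 0) ∨
       (ax * u1 + cx * u2 = 0 ∧ bx * u1 + dx * u2 = 0 ∧
        ay * u1 + cy * u2 = 0 ∧ by' * u1 + dy * u2 = 0)) := by
  obtain ⟨p1, p2, q1, q2, hxa, hxb, hxc, hxd⟩ := facto ax bx cx dx hX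
  obtain ⟨r1, r2, s1, s2, hya, hyb, hyc, hyd⟩ := facto ay by' cy dy hY
  have key : (p1 * r2 - p2 * r1) * (q1 * s2 - q2 * s1) = 0 := by
    rw [hxa, hxb, hxc, hxd, hya, hyb, hyc, hyd] at hP
    linear_combination hP
  have hne : ∀ t1 t2 : ℂ, ¬(t1 = 0 ∧ t2 = 0) → ¬(t2 = 0 ∧ -t1 = 0) := by
    intro t1 t2 h hc
    exact h ⟨by linear_combination -hc.2, hc.1⟩
  rcases mul_eq_zero.mp key with hpr | hqs
  · -- common cokernel
    by_cases hr : r1 = 0 ∧ r2 = 0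
    · by_cases hp : p1 = 0 ∧ p2 = 0
      · exact ⟨1, 0, by simp, Or.inr (by
          rw [hxa, hxb, hxc, hxd, hya, hyb, hyc, hyd, hp.1, hp.2, hr.1, hr.2]
          exact ⟨by ring, by ring, by ring, by ring⟩)⟩
      · refine ⟨p2, -p1, hne p1 p2 hp, Or.inr ⟨?_, ?_, ?_, ?_⟩⟩
        · rw [hxa, hxc]; ring
        · rw [hxb, hxd]; ring
        · rw [hya, hyc, hr.1, hr.2]; ring
        · rw [hyb, hyd, hr.1, hr.2]; ring
    · refine ⟨r2, -r1, hne r1 r2 hr, Or.inr ⟨?_, ?_, ?_, ?_⟩⟩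
      · rw [hxa, hxc]; linear_combination q1 * hpr
      · rw [hxb, hxd]; linear_combination q2 * hpr
      · rw [hya, hyc]; ring
      · rw [hyb, hyd]; ring
  · -- common kernel
    by_cases hs : s1 = 0 ∧ s2 = 0
    · by_cases hq : q1 = 0 ∧ q2 = 0
      · exact ⟨1, 0, by simp, Or.inl (by
          rw [hxa, hxb, hxc, hxd, hya, hyb, hyc, hyd, hq.1, hq.2, hs.1, hs.2]
          exact ⟨by ring, by ring, by ring, by ring⟩)⟩
      · refine ⟨q2, -q1, hne q1 q2 hq, Or.inl ⟨?_, ?_, ?_, ?_⟩⟩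
        · rw [hxa, hxb]; ring
        · rw [hxc, hxd]; ring
        · rw [hya, hyb, hs.1, hs.2]; ring
        · rw [hyc, hyd, hs.1, hs.2]; ring
    · refine ⟨s2, -s1, hne s1 s2 hs, Or.inl ⟨?_, ?_, ?_, ?_⟩⟩
      · rw [hxa, hxb]; linear_combination p1 * hqs
      · rw [hxc, hxd]; linear_combination p2 * hqs
      · rw [hya, hyb]; ring
      · rw [hyc, hyd]; ring

noncomputable def Lmap (u1 u2 : ℂ) : (Fin 4 → ℂ) →ₗ[ℂ] (Fin 2 → ℂ) where
  toFun z := ![(z 2 + z 3) * u1 + (z 0 - Complex.I * z 1) * u2,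
               (z 0 + Complex.I * z 1) * u1 + (z 3 - z 2) * u2]
  map_add' a b := by
    funext j; fin_cases j <;> simp <;> ring
  map_smul' c a := by
    funext j; fin_cases j <;> simp <;> ring

lemma mem_ker_Lmap (u1 u2 : ℂ) (z : Fin 4 → ℂ) :
    z ∈ LinearMap.ker (Lmap u1 u2) ↔
      ((z 2 + z 3) * u1 + (z 0 - Complex.I * z 1) * u2 = 0 ∧
       (z 0 + Complex.I * z 1) * u1 + (z 3 - z 2) * u2 = 0) := by
  rw [LinearMap.mem_ker]
  constructor
  · intro h
    exact ⟨by simpa [Lmap] using congrFun h 0, by simpa [Lmap] using congrFun h 1⟩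
  · rintro ⟨h0, h1⟩
    funext j; fin_cases j <;> simp [Lmap, h0, h1]

lemma Lmap_surj (u1 u2 : ℂ) (hu : ¬(u1 = 0 ∧ u2 = 0)) :
    Function.Surjective (Lmap u1 u2) := by
  intro w
  by_cases h2 : u2 = 0
  · have h1 : u1 ≠ 0 := fun h => hu ⟨h, h2⟩
    refine ⟨![w 1 / (2 * u1), -Complex.I * w 1 / (2 * u1),
      w 0 / (2 * u1), w 0 / (2 * u1)], ?_⟩
    funext j; fin_cases j <;> simp [Lmap, h2] <;> field_simp <;> ring_nf <;>
      simp [Complex.I_sq] <;> ring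
  · refine ⟨![w 0 / (2 * u2), Complex.I * w 0 / (2 * u2),
      -(w 1 / (2 * u2)), w 1 / (2 * u2)], ?_⟩
    funext j; fin_cases j <;> simp [Lmap] <;> field_simp <;> ring_nf <;>
      simp [Complex.I_sq] <;> ring

lemma Lmap_ker_rank (u1 u2 : ℂ) (hu : ¬(u1 = 0 ∧ u2 = 0)) :
    Module.finrank ℂ (LinearMap.ker (Lmap u1 u2)) = 2 := by
  have h := LinearMap.finrank_range_add_finrank_ker (Lmap u1 u2)
  rw [LinearMap.range_eq_top.mpr (Lmap_surj u1 u2 hu), finrank_top] at h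
  simp only [Module.finrank_fin_fun] at h
  omega

noncomputable def v0vec (u1 u2 : ℂ) : Fin 4 → ℂ :=
  ![-(conj u2 * u1 + conj u1 * u2) / 2,
    (conj u1 * u2 - conj u2 * u1) * Complex.I / 2,
    (conj u2 * u2 - conj u1 * u1) / 2,
    (conj u2 * u2 + conj u1 * u1) / 2]

lemma v0vec_real (u1 u2 : ℂ) : ∀ i, ((v0vec u1 u2) i).im = 0 := by
  intro i
  rw [← Complex.conj_eq_iff_im]
  fin_cases i
  · show conj (-(conj u2 * u1 + conj u1 * u2) / 2) = -(conj u2 * u1 + conj u1 * u2) / 2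
    simp only [map_div₀, map_neg, map_add, map_mul, Complex.conj_conj, map_ofNat]
    ring
  · show conj ((conj u1 * u2 - conj u2 * u1) * Complex.I / 2) =
      (conj u1 * u2 - conj u2 * u1) * Complex.I / 2
    simp only [map_div₀, map_sub, map_mul, Complex.conj_conj, Complex.conj_I, map_ofNat]
    ring
  · show conj ((conj u2 * u2 - conj u1 * u1) / 2) = (conj u2 * u2 - conj u1 * u1) / 2
    simp only [map_div₀, map_sub, map_mul, Complex.conj_conj, map_ofNat]
    ring
  · show conj ((conj u2 * u2 + conj u1 * u1) / 2) = (conj u2 * u2 + conj u1 * u1) / 2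
    simp only [map_div₀, map_add, map_mul, Complex.conj_conj, map_ofNat]
    ring

lemma v0vec_ne (u1 u2 : ℂ) (hu : ¬(u1 = 0 ∧ u2 = 0)) : v0vec u1 u2 ≠ 0 := by
  intro h
  have h3 : (conj u2 * u2 + conj u1 * u1) / 2 = 0 := by
    simpa [v0vec] using congrFun h 3
  rw [div_eq_zero_iff] at h3
  have h3' : conj u2 * u2 + conj u1 * u1 = 0 := by
    rcases h3 with h | h
    · exact h
    · exact absurd h (by norm_num)
  rw [mul_comm (conj u2), mul_comm (conj u1), Complex.mul_conj, Complex.mul_conj,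
    ← Complex.ofReal_add, Complex.ofReal_eq_zero] at h3'
  have h1 : Complex.normSq u2 = 0 ∧ Complex.normSq u1 = 0 := by
    constructor <;> nlinarith [Complex.normSq_nonneg u1, Complex.normSq_nonneg u2]
  exact hu ⟨Complex.normSq_eq_zero.mp h1.2, Complex.normSq_eq_zero.mp h1.1⟩

lemma v0vec_mem_ker (u1 u2 : ℂ) :
    v0vec u1 u2 ∈ LinearMap.ker (Lmap u1 u2) := by
  rw [mem_ker_Lmap]
  constructor
  · show ((conj u2 * u2 - conj u1 * u1) / 2 + (conj u2 * u2 + conj u1 * u1) / 2) * u1 +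
      (-(conj u2 * u1 + conj u1 * u2) / 2 -
        Complex.I * ((conj u1 * u2 - conj u2 * u1) * Complex.I / 2)) * u2 = 0
    linear_combination ((conj u2 * u1 - conj u1 * u2) * u2 / 2) * Complex.I_sq
  · show (-(conj u2 * u1 + conj u1 * u2) / 2 +
      Complex.I * ((conj u1 * u2 - conj u2 * u1) * Complex.I / 2)) * u1 +
      ((conj u2 * u2 + conj u1 * u1) / 2 - (conj u2 * u2 - conj u1 * u1) / 2) * u2 = 0
    linear_combination ((conj u1 * u2 - conj u2 * u1) * u1 / 2) * Complex.I_sq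

lemma innerCore (M : Submodule ℂ (Fin 4 → ℂ)) (x y : Fin 4 → ℂ)
    (hdim : Module.finrank ℂ M = 2)
    (hspan : M = Submodule.span ℂ {x, y})
    (u1 u2 : ℂ) (hu : ¬(u1 = 0 ∧ u2 = 0))
    (hx1 : (x 2 + x 3) * u1 + (x 0 - Complex.I * x 1) * u2 = 0)
    (hx2 : (x 0 + Complex.I * x 1) * u1 + (x 3 - x 2) * u2 = 0)
    (hy1 : (y 2 + y 3) * u1 + (y 0 - Complex.I * y 1) * u2 = 0)
    (hy2 : (y 0 + Complex.I * y 1) * u1 + (y 3 - y 2) * u2 = 0) :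
    ∃ v : Fin 4 → ℂ, v ≠ 0 ∧ (∀ i, (v i).im = 0) ∧
      M ⊓ Submodule.comap conjMap M = Submodule.span ℂ {v} := by
  have hML : M ≤ LinearMap.ker (Lmap u1 u2) := by
    rw [hspan, Submodule.span_le]
    intro z hz
    simp only [Set.mem_insert_iff, Set.mem_singleton_iff] at hz
    rcases hz with rfl | rfl
    · exact (mem_ker_Lmap u1 u2 z).mpr ⟨hx1, hx2⟩
    · exact (mem_ker_Lmap u1 u2 z).mpr ⟨hy1, hy2⟩
  have hMK : M = LinearMap.ker (Lmap u1 u2) :=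
    Submodule.eq_of_le_of_finrank_le hML (by rw [Lmap_ker_rank u1 u2 hu, hdim])
  refine ⟨v0vec u1 u2, v0vec_ne u1 u2 hu, v0vec_real u1 u2, ?_⟩
  rw [hMK]
  apply le_antisymm
  · intro z hz
    rw [Submodule.mem_inf] at hz
    obtain ⟨hz1, hz2⟩ := hz
    rw [mem_ker_Lmap] at hz1
    obtain ⟨e1, e2⟩ := hz1
    rw [Submodule.mem_comap, mem_ker_Lmap] at hz2
    simp only [conjMap_apply] at hz2
    obtain ⟨f1, f2⟩ := hz2
    have e3 : (z 2 + z 3) * conj u1 + (z 0 + Complex.I * z 1) * conj u2 = 0 := by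
      have h := congrArg (starRingEnd ℂ) f1
      simp only [map_add, map_mul, map_sub, map_zero, Complex.conj_conj,
        Complex.conj_I] at h
      linear_combination h
    have e4 : (z 0 - Complex.I * z 1) * conj u1 + (z 3 - z 2) * conj u2 = 0 := by
      have h := congrArg (starRingEnd ℂ) f2
      simp only [map_add, map_mul, map_sub, map_zero, Complex.conj_conj,
        Complex.conj_I] at h
      linear_combination h
    rw [Submodule.mem_span_singleton]
    by_cases h2 : u2 = 0
    · have h1 : u1 ≠ 0 := fun h => hu ⟨h, h2⟩
      have hc1 : (conj u1 : ℂ) ≠ 0 := by simpa using h1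
      rw [h2] at e1 e2 e4
      simp only [mul_zero, add_zero, map_zero] at e1 e2 e4
      have hA : z 2 + z 3 = 0 := by
        rcases mul_eq_zero.mp e1 with h | h
        · exact h
        · exact absurd h h1
      have hG : z 0 + Complex.I * z 1 = 0 := by
        rcases mul_eq_zero.mp e2 with h | h
        · exact h
        · exact absurd h h1
      have hB : z 0 - Complex.I * z 1 = 0 := by
        rcases mul_eq_zero.mp e4 with h | h
        · exact h
        · exact absurd h hc1
      have hz0 : z 0 = 0 := by linear_combination (hG + hB) / 2
      have hz1' : z 1 = 0 := by
        have hIz : Complex.I * z 1 = 0 := by linear_combination (hG - hB) / 2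
        rcases mul_eq_zero.mp hIz with h | h
        · exact absurd h Complex.I_ne_zero
        · exact h
      refine ⟨(z 3 - z 2) / (conj u1 * u1), ?_⟩
      funext i
      fin_cases i
      · show ((z 3 - z 2) / (conj u1 * u1)) • (-(conj u2 * u1 + conj u1 * u2) / 2) = z 0
        rw [smul_eq_mul, h2, hz0]
        simp
      · show ((z 3 - z 2) / (conj u1 * u1)) •
          ((conj u1 * u2 - conj u2 * u1) * Complex.I / 2) = z 1
        rw [smul_eq_mul, h2, hz1']
        simp
      · show ((z 3 - z 2) / (conj u1 * u1)) • ((conj u2 * u2 - conj u1 * u1) / 2) = z 2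
        rw [smul_eq_mul, h2]
        simp only [map_zero, zero_mul, mul_zero, zero_sub, zero_add, add_zero]
        rw [div_mul_eq_mul_div, div_eq_iff (mul_ne_zero hc1 h1)]
        linear_combination (-(conj u1 * u1) / 2) * hA
      · show ((z 3 - z 2) / (conj u1 * u1)) • ((conj u2 * u2 + conj u1 * u1) / 2) = z 3
        rw [smul_eq_mul, h2]
        simp only [map_zero, zero_mul, mul_zero, zero_sub, zero_add, add_zero]
        rw [div_mul_eq_mul_div, div_eq_iff (mul_ne_zero hc1 h1)]
        linear_combination (-(conj u1 * u1) / 2) * hA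
    · have hcu2 : (conj u2 : ℂ) ≠ 0 := by simpa using h2
      have key0 : 2 * (z 0 * (conj u2 * u2)) =
          (z 2 + z 3) * (-(conj u2 * u1 + conj u1 * u2)) := by
        linear_combination (conj u2) * e1 + u2 * e3
      have key1 : 2 * (z 1 * (conj u2 * u2)) =
          (z 2 + z 3) * ((conj u1 * u2 - conj u2 * u1) * Complex.I) := by
        linear_combination Complex.I * ((conj u2) * e1 - u2 * e3) +
          2 * z 1 * (conj u2) * u2 * Complex.I_sq
      have key2 : 2 * (z 2 * (conj u2 * u2)) =
          (z 2 + z 3) * (conj u2 * u2 - conj u1 * u1) := by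
        linear_combination u1 * e3 - (conj u2) * e2
      have key3 : 2 * (z 3 * (conj u2 * u2)) =
          (z 2 + z 3) * (conj u2 * u2 + conj u1 * u1) := by
        linear_combination (conj u2) * e2 - u1 * e3
      refine ⟨(z 2 + z 3) / (conj u2 * u2), ?_⟩
      funext i
      fin_cases i
      · show ((z 2 + z 3) / (conj u2 * u2)) • (-(conj u2 * u1 + conj u1 * u2) / 2) = z 0
        rw [smul_eq_mul]
        rw [div_mul_eq_mul_div, div_eq_iff (mul_ne_zero hcu2 h2)]
        linear_combination (-1/2 : ℂ) * key0
      · show ((z 2 + z 3) / (conj u2 * u2)) •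
          ((conj u1 * u2 - conj u2 * u1) * Complex.I / 2) = z 1
        rw [smul_eq_mul]
        rw [div_mul_eq_mul_div, div_eq_iff (mul_ne_zero hcu2 h2)]
        linear_combination (-1/2 : ℂ) * key1
      · show ((z 2 + z 3) / (conj u2 * u2)) • ((conj u2 * u2 - conj u1 * u1) / 2) = z 2
        rw [smul_eq_mul]
        rw [div_mul_eq_mul_div, div_eq_iff (mul_ne_zero hcu2 h2)]
        linear_combination (-1/2 : ℂ) * key2
      · show ((z 2 + z 3) / (conj u2 * u2)) • ((conj u2 * u2 + conj u1 * u1) / 2) = z 3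
        rw [smul_eq_mul]
        rw [div_mul_eq_mul_div, div_eq_iff (mul_ne_zero hcu2 h2)]
        linear_combination (-1/2 : ℂ) * key3
  · rw [Submodule.span_le, Set.singleton_subset_iff, SetLike.mem_coe,
      Submodule.mem_inf]
    refine ⟨v0vec_mem_ker u1 u2, ?_⟩
    rw [Submodule.mem_comap,
      (real_iff_conj_fixed (v0vec u1 u2)).mp (v0vec_real u1 u2)]
    exact v0vec_mem_ker u1 u2

/-- Negation of the second coordinate, as a complex-linear involution. -/
noncomputable def snegL : (Fin 4 → ℂ) →ₗ[ℂ] (Fin 4 → ℂ) where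
  toFun w := fun i => if i = 1 then -(w i) else w i
  map_add' a b := by funext i; by_cases h : i = 1 <;> simp [h] <;> ring
  map_smul' c a := by funext i; by_cases h : i = 1 <;> simp [h]

noncomputable def sneg : (Fin 4 → ℂ) ≃ₗ[ℂ] (Fin 4 → ℂ) :=
  LinearEquiv.ofInvolutive snegL (by
    intro w; funext i; by_cases h : i = 1 <;> simp [snegL, h])

lemma sneg_apply (w : Fin 4 → ℂ) (i : Fin 4) :
    sneg w i = if i = 1 then -(w i) else w i := rfl

lemma sneg_conj (w : Fin 4 → ℂ) : sneg (conjMap w) = conjMap (sneg w) := by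
  funext i
  rw [sneg_apply, conjMap_apply, conjMap_apply, sneg_apply]
  by_cases h : i = 1 <;> simp [h]

lemma coreStd (M : Submodule ℂ (Fin 4 → ℂ))
    (hdim : Module.finrank ℂ M = 2)
    (hnull : ∀ x ∈ M, ∀ y ∈ M,
      x 0 * y 0 + x 1 * y 1 + x 2 * y 2 - x 3 * y 3 = 0) :
    ∃ v : Fin 4 → ℂ, v ≠ 0 ∧ (∀ i, (v i).im = 0) ∧
      M ⊓ Submodule.comap conjMap M = Submodule.span ℂ {v} := by
  let bM : Module.Basis (Fin 2) ℂ M := Module.finBasisOfFinrankEq ℂ M hdim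
  set x : Fin 4 → ℂ := (bM 0 : Fin 4 → ℂ) with hxdef
  set y : Fin 4 → ℂ := (bM 1 : Fin 4 → ℂ) with hydef
  have hspan : M = Submodule.span ℂ {x, y} := by
    have h0 : Submodule.map M.subtype ⊤ = M := Submodule.map_subtype_top M
    rw [← bM.span_eq, Submodule.map_span] at h0
    rw [← h0]
    congr 1
    ext z
    simp only [Set.mem_image, Set.mem_range, Set.mem_insert_iff, Set.mem_singleton_iff]
    constructor
    · rintro ⟨m, ⟨i, rfl⟩, rfl⟩
      fin_cases i
      · left; rfl
      · right; rfl
    · rintro (rfl | rfl)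
      · exact ⟨bM 0, ⟨0, rfl⟩, rfl⟩
      · exact ⟨bM 1, ⟨1, rfl⟩, rfl⟩
  have hxM : x ∈ M := (bM 0).2
  have hyM : y ∈ M := (bM 1).2
  have hxx := hnull x hxM x hxM
  have hyy := hnull y hyM y hyM
  have hxy := hnull x hxM y hyM
  have hX : (x 2 + x 3) * (x 3 - x 2) =
      (x 0 - Complex.I * x 1) * (x 0 + Complex.I * x 1) := by
    linear_combination -hxx + (x 1) ^ 2 * Complex.I_sq
  have hY : (y 2 + y 3) * (y 3 - y 2) =
      (y 0 - Complex.I * y 1) * (y 0 + Complex.I * y 1) := by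
    linear_combination -hyy + (y 1) ^ 2 * Complex.I_sq
  have hP : (x 2 + x 3) * (y 3 - y 2) + (y 2 + y 3) * (x 3 - x 2) =
      (x 0 - Complex.I * x 1) * (y 0 + Complex.I * y 1) +
      (y 0 - Complex.I * y 1) * (x 0 + Complex.I * x 1) := by
    linear_combination -2 * hxy + 2 * (x 1) * (y 1) * Complex.I_sq
  obtain ⟨u1, u2, hu, hker | hcok⟩ :=
    lemA (x 2 + x 3) (x 0 - Complex.I * x 1) (x 0 + Complex.I * x 1) (x 3 - x 2)
      (y 2 + y 3) (y 0 - Complex.I * y 1) (y 0 + Complex.I * y 1) (y 3 - y 2)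
      hX hY hP
  · exact innerCore M x y hdim hspan u1 u2 hu hker.1 hker.2.1 hker.2.2.1 hker.2.2.2
  · -- reflect with sneg and use the kernel case
    have hdim' : Module.finrank ℂ
        (M.map (sneg : (Fin 4 → ℂ) →ₗ[ℂ] (Fin 4 → ℂ))) = 2 := by
      rw [LinearEquiv.finrank_map_eq]; exact hdim
    have hspan' : M.map (sneg : (Fin 4 → ℂ) →ₗ[ℂ] (Fin 4 → ℂ)) =
        Submodule.span ℂ {sneg x, sneg y} := by
      rw [hspan, Submodule.map_span, Set.image_insert_eq, Set.image_singleton]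
      rfl
    have hsx : ∀ w : Fin 4 → ℂ, sneg w 0 = w 0 ∧ sneg w 1 = -(w 1) ∧
        sneg w 2 = w 2 ∧ sneg w 3 = w 3 := by
      intro w
      refine ⟨?_, ?_, ?_, ?_⟩ <;> rw [sneg_apply] <;> simp
    obtain ⟨h0x, h1x, h2x, h3x⟩ := hsx x
    obtain ⟨h0y, h1y, h2y, h3y⟩ := hsx y
    obtain ⟨u, hune, hur, hu'⟩ := innerCore
      (M.map (sneg : (Fin 4 → ℂ) →ₗ[ℂ] (Fin 4 → ℂ))) (sneg x) (sneg y)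
      hdim' hspan' u1 u2 hu
      (by rw [h0x, h1x, h2x, h3x]; linear_combination hcok.1)
      (by rw [h0x, h1x, h2x, h3x]; linear_combination hcok.2.1)
      (by rw [h0y, h1y, h2y, h3y]; linear_combination hcok.2.2.1)
      (by rw [h0y, h1y, h2y, h3y]; linear_combination hcok.2.2.2)
    exact pullback sneg sneg_conj M u hune hur hu'

theorem lorentzian_totally_null_two_plane_has_real_index_one
    (gR : (Fin 4 → ℝ) →ₗ[ℝ] (Fin 4 → ℝ) →ₗ[ℝ] ℝ)
    (hsymm : ∀ v w, gR v w = gR w v)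
    (b : Module.Basis (Fin 4) ℝ (Fin 4 → ℝ))
    (hsig : ∀ i j, gR (b i) (b j) = etaL i j)
    (N : Submodule ℂ (Fin 4 → ℂ))
    (hdim : Module.finrank ℂ N = 2)
    (hnull : ∀ x ∈ N, ∀ y ∈ N, gCext (fun v w => gR v w) x y = 0) :
    ∃ v : Fin 4 → ℂ, v ≠ 0 ∧ (∀ i, (v i).im = 0) ∧
      N ⊓ Submodule.comap conjMap N = Submodule.span ℂ {v} := by
  classical
  set E := b.equivFun with hE
  have gform : ∀ v w : Fin 4 → ℝ, gR v w =
      E v 0 * E w 0 + E v 1 * E w 1 + E v 2 * E w 2 - E v 3 * E w 3 := by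
    intro v w
    have hv : v = E v 0 • b 0 + E v 1 • b 1 + E v 2 • b 2 + E v 3 • b 3 := by
      have h := b.sum_equivFun v
      rw [Fin.sum_univ_four] at h
      exact h.symm
    have hw : w = E w 0 • b 0 + E w 1 • b 1 + E w 2 • b 2 + E w 3 • b 3 := by
      have h := b.sum_equivFun w
      rw [Fin.sum_univ_four] at h
      exact h.symm
    conv_lhs => rw [hv, hw]
    simp only [map_add, map_smul, LinearMap.add_apply, LinearMap.smul_apply,
      smul_eq_mul, hsig]
    simp [etaL]
    ring
  set Pc := cpxE E with hPcdef
  have hPc : ∀ w, Pc (conjMap w) = conjMap (Pc w) := fun w =>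
    cpxL_conj E.toLinearMap w
  have hPapp : ∀ (z : Fin 4 → ℂ) (i : Fin 4),
      Pc z i = (E (reVec z) i : ℂ) + (E (imVec z) i : ℂ) * Complex.I :=
    fun z i => rfl
  have hform : ∀ x y : Fin 4 → ℂ, gCext (fun v w => gR v w) x y =
      Pc x 0 * Pc y 0 + Pc x 1 * Pc y 1 + Pc x 2 * Pc y 2 - Pc x 3 * Pc y 3 := by
    intro x y
    simp only [gCext, hPapp, gform]
    rw [Complex.ext_iff]
    constructor <;> simp <;> ring
  set M := N.map (Pc : (Fin 4 → ℂ) →ₗ[ℂ] (Fin 4 → ℂ)) with hMdef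
  have hdim' : Module.finrank ℂ M = 2 := by
    rw [hMdef, LinearEquiv.finrank_map_eq]; exact hdim
  have hnull' : ∀ x' ∈ M, ∀ y' ∈ M,
      x' 0 * y' 0 + x' 1 * y' 1 + x' 2 * y' 2 - x' 3 * y' 3 = 0 := by
    rintro x' hx' y' hy'
    rw [hMdef, Submodule.mem_map] at hx' hy'
    obtain ⟨x, hx, rfl⟩ := hx'
    obtain ⟨y, hy, rfl⟩ := hy'
    rw [show ((Pc : (Fin 4 → ℂ) →ₗ[ℂ] (Fin 4 → ℂ)) x) = Pc x from rfl,
      show ((Pc : (Fin 4 → ℂ) →ₗ[ℂ] (Fin 4 → ℂ)) y) = Pc y from rfl,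
      ← hform]
    exact hnull x hx y hy
  obtain ⟨u, hune, hur, hu⟩ := coreStd M hdim' hnull'
  exact pullback Pc hPc N u hune hur hu
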